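/- arXiv:1812.07691 — 4 statements merged into one kernel-verified Lean document; each statement's English description precedes it below -/
import Mathlib

section
/- Let ι be a nonempty type (indexing allocation policies) and f, g : ι → ℝ with 0 ≤ g p ≤ 1 for all p, and suppose the range of f is bounded above. For c ≥ 0 set V c := ⨆ p, (f p − c·g p). Let μ ∈ ℝ. If 0 ≤ c₂ ≤ c₁ and μ − c₁ > V c₁, then μ − c₂ > V c₂. (Hence the allocable condition 'immediate life gain minus penalty exceeds the optimal penalized continuation value' is preserved as the penalty parameter decreases: the allocable set expands monotonically as organ availability increases.) -/
/-- If a state–waiting-time pair is allocable at penalty `c₁` (the immediate life gain `μ`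
minus the penalty exceeds the optimal penalized continuation value `V c₁`), then it is
allocable at any smaller penalty `c₂`: the allocable set expands monotonically as organ
availability increases. Here `f p` is the expected life gain of continuation policy `p`
and `g p ∈ [0,1]` is the probability of future transplantation under `p`. -/
theorem allocable_set_monotone
    {ι : Type*} [Nonempty ι] (f g : ι → ℝ)
    (hg : ∀ p, 0 ≤ g p ∧ g p ≤ 1)
    (hf : BddAbove (Set.range f))
    (μ : ℝ) (c₁ c₂ : ℝ) (hc₂ : 0 ≤ c₂) (hc : c₂ ≤ c₁)
    (h : μ - c₁ > ⨆ p, (f p - c₁ * g p)) :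
    μ - c₂ > ⨆ p, (f p - c₂ * g p) := by
  obtain ⟨M, hM⟩ := hf
  have hbdd : BddAbove (Set.range fun p => f p - c₁ * g p) := by
    refine ⟨M, ?_⟩
    rintro x ⟨p, rfl⟩
    dsimp only
    have h1 : 0 ≤ c₁ * g p := mul_nonneg (hc₂.trans hc) (hg p).1
    have h2 : f p ≤ M := hM ⟨p, rfl⟩
    linarith
  have key : (⨆ p, (f p - c₂ * g p)) ≤ (⨆ p, (f p - c₁ * g p)) + (c₁ - c₂) := by
    refine ciSup_le fun p => ?_
    have h1 : (c₁ - c₂) * g p ≤ (c₁ - c₂) * 1 :=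
      mul_le_mul_of_nonneg_left (hg p).2 (by linarith)
    have h2 : f p - c₁ * g p ≤ ⨆ q, (f q - c₁ * g q) := le_ciSup hbdd p
    nlinarith
  linarith
end

section
/- Fix n, T ∈ ℕ, substochastic transition matrices q (q s i j ≥ 0 and ∑_j q s i j ≤ 1 for all s < T, i), and rewards μ s i ∈ ℝ. For c ∈ ℝ define K_c by backward recursion K_c T i = 0 and K_c s i = max (μ s i − c) (∑_j q s i j · K_c (s+1) j) for s < T. Then for all c₁ ≥ c₂, all s ≤ T and all i: K_{c₁} s i ≤ K_{c₂} s i ≤ K_{c₁} s i + (c₁ − c₂). That is, the optimal penalized value is antitone and 1-Lipschitz from above in the penalty parameter. -/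
open Finset in
/-- The optimal penalized value function of the discrete-time allocation problem is
antitone and 1-Lipschitz from above in the penalty parameter: for `c₁ ≥ c₂`,
`K_{c₁} ≤ K_{c₂} ≤ K_{c₁} + (c₁ - c₂)` on the horizon (key inequality in the proof of
Theorem 4.3). -/
theorem bellman_value_antitone_and_lipschitz_in_penalty
    (n T : ℕ) (q : ℕ → Fin n → Fin n → ℝ) (μ : ℕ → Fin n → ℝ)
    (hq0 : ∀ s < T, ∀ i j, 0 ≤ q s i j)
    (hq1 : ∀ s < T, ∀ i, ∑ j, q s i j ≤ 1)
    (c₁ c₂ : ℝ) (hc : c₂ ≤ c₁)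
    (K₁ K₂ : ℕ → Fin n → ℝ)
    (hK₁T : ∀ i, K₁ T i = 0)
    (hK₁ : ∀ s < T, ∀ i, K₁ s i = max (μ s i - c₁) (∑ j, q s i j * K₁ (s + 1) j))
    (hK₂T : ∀ i, K₂ T i = 0)
    (hK₂ : ∀ s < T, ∀ i, K₂ s i = max (μ s i - c₂) (∑ j, q s i j * K₂ (s + 1) j)) :
    ∀ s ≤ T, ∀ i, K₁ s i ≤ K₂ s i ∧ K₂ s i ≤ K₁ s i + (c₁ - c₂) := by
  have key : ∀ k s, s + k = T → ∀ i, K₁ s i ≤ K₂ s i ∧ K₂ s i ≤ K₁ s i + (c₁ - c₂) := by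
    intro k
    induction k with
    | zero =>
      intro s hs i
      simp only [Nat.add_zero] at hs
      subst hs
      rw [hK₁T, hK₂T]
      exact ⟨le_rfl, by linarith⟩
    | succ k ih =>
      intro s hs i
      have hsT : s < T := by omega
      have ih' : ∀ j, K₁ (s+1) j ≤ K₂ (s+1) j ∧ K₂ (s+1) j ≤ K₁ (s+1) j + (c₁ - c₂) := by
        intro j; exact ih (s+1) (by omega) j
      rw [hK₁ s hsT i, hK₂ s hsT i]
      constructor
      · apply max_le_max
        · linarith
        · apply Finset.sum_le_sum
          intro j _
          exact mul_le_mul_of_nonneg_left (ih' j).1 (hq0 s hsT i j)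
      · rw [← max_add_add_right]
        apply max_le_max
        · linarith
        · have h1 : ∑ j, q s i j * K₂ (s+1) j ≤ ∑ j, q s i j * (K₁ (s+1) j + (c₁ - c₂)) := by
            apply Finset.sum_le_sum
            intro j _
            exact mul_le_mul_of_nonneg_left (ih' j).2 (hq0 s hsT i j)
          have h2 : ∑ j, q s i j * (K₁ (s+1) j + (c₁ - c₂))
              = (∑ j, q s i j * K₁ (s+1) j) + (∑ j, q s i j) * (c₁ - c₂) := by
            rw [Finset.sum_mul]
            rw [← Finset.sum_add_distrib]
            congr 1; ext j; ring
          have h3 : (∑ j, q s i j) * (c₁ - c₂) ≤ 1 * (c₁ - c₂) :=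
            mul_le_mul_of_nonneg_right (hq1 s hsT i) (by linarith)
          calc ∑ j, q s i j * K₂ (s+1) j ≤ _ := h1
            _ = _ := h2
            _ ≤ (∑ j, q s i j * K₁ (s+1) j) + (c₁ - c₂) := by linarith
  intro s hs i
  exact key (T - s) s (by omega) i
end

section
/- Fix n, T ∈ ℕ, substochastic transition matrices q (q s i j ≥ 0 and ∑_j q s i j ≤ 1 for all s < T, i), and rewards μ s i ∈ ℝ. For c ∈ ℝ define K_c by backward recursion K_c T i = 0 and K_c s i = max (μ s i − c) (∑_j q s i j · K_c (s+1) j), and define the allocable set 𝒜_c = {(s,i) : s < T and μ s i − c > ∑_j q s i j · K_c (s+1) j}. Then for all c₁ ≥ c₂, 𝒜_{c₁} ⊆ 𝒜_{c₂}: the allocable set expands monotonically as the penalty parameter decreases. -/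
open Finset in
/-- Theorem 4.3 in the discrete-time, finite-state setting: the allocable set
`𝒜_c = {(s,i) : s < T ∧ μ s i - c > ∑ j, q s i j * K_c (s+1) j}` expands monotonically
as the penalty parameter decreases: for `c₁ ≥ c₂`, `𝒜_{c₁} ⊆ 𝒜_{c₂}`. -/
theorem allocable_set_monotone_discrete
    (n T : ℕ) (q : ℕ → Fin n → Fin n → ℝ) (μ : ℕ → Fin n → ℝ)
    (hq0 : ∀ s < T, ∀ i j, 0 ≤ q s i j)
    (hq1 : ∀ s < T, ∀ i, ∑ j, q s i j ≤ 1)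
    (c₁ c₂ : ℝ) (hc : c₂ ≤ c₁)
    (K₁ K₂ : ℕ → Fin n → ℝ)
    (hK₁T : ∀ i, K₁ T i = 0)
    (hK₁ : ∀ s < T, ∀ i, K₁ s i = max (μ s i - c₁) (∑ j, q s i j * K₁ (s + 1) j))
    (hK₂T : ∀ i, K₂ T i = 0)
    (hK₂ : ∀ s < T, ∀ i, K₂ s i = max (μ s i - c₂) (∑ j, q s i j * K₂ (s + 1) j)) :
    {p : ℕ × Fin n | p.1 < T ∧ μ p.1 p.2 - c₁ > ∑ j, q p.1 p.2 j * K₁ (p.1 + 1) j} ⊆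
      {p : ℕ × Fin n | p.1 < T ∧ μ p.1 p.2 - c₂ > ∑ j, q p.1 p.2 j * K₂ (p.1 + 1) j} := by
  have hsum : ∀ s < T, ∀ i, (∀ j, K₂ (s + 1) j ≤ K₁ (s + 1) j + (c₁ - c₂)) →
      ∑ j, q s i j * K₂ (s + 1) j ≤ (∑ j, q s i j * K₁ (s + 1) j) + (c₁ - c₂) := by
    intro s hs i h
    have h1 : ∑ j, q s i j * K₂ (s + 1) j
        ≤ ∑ j, q s i j * (K₁ (s + 1) j + (c₁ - c₂)) := by
      apply Finset.sum_le_sum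
      intro j _
      exact mul_le_mul_of_nonneg_left (h j) (hq0 s hs i j)
    have h2 : ∑ j, q s i j * (K₁ (s + 1) j + (c₁ - c₂))
        = (∑ j, q s i j * K₁ (s + 1) j) + (∑ j, q s i j) * (c₁ - c₂) := by
      rw [Finset.sum_mul]
      rw [← Finset.sum_add_distrib]
      congr 1; ext j; ring
    have h3 : (∑ j, q s i j) * (c₁ - c₂) ≤ 1 * (c₁ - c₂) :=
      mul_le_mul_of_nonneg_right (hq1 s hs i) (by linarith)
    nlinarith
  have key : ∀ k s, s + k = T → ∀ i, K₂ s i ≤ K₁ s i + (c₁ - c₂) := by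
    intro k
    induction k with
    | zero =>
      intro s hs i
      simp only [Nat.add_zero] at hs
      subst hs
      rw [hK₁T, hK₂T]; linarith
    | succ k ih =>
      intro s hs i
      have hsT : s < T := by omega
      have ihs : ∀ j, K₂ (s + 1) j ≤ K₁ (s + 1) j + (c₁ - c₂) :=
        ih (s + 1) (by omega)
      rw [hK₁ s hsT i, hK₂ s hsT i]
      rcases max_cases (μ s i - c₂) (∑ j, q s i j * K₂ (s + 1) j) with ⟨h, _⟩ | ⟨h, _⟩ <;>
        rw [h]
      · have := le_max_left (μ s i - c₁) (∑ j, q s i j * K₁ (s + 1) j)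
        linarith
      · have := le_max_right (μ s i - c₁) (∑ j, q s i j * K₁ (s + 1) j)
        have := hsum s hsT i ihs
        linarith
  rintro ⟨s, i⟩ ⟨hs, hgt⟩
  refine ⟨hs, ?_⟩
  have ihs : ∀ j, K₂ (s + 1) j ≤ K₁ (s + 1) j + (c₁ - c₂) := by
    intro j
    exact key (T - (s + 1)) (s + 1) (by omega) j
  have := hsum s hs i ihs
  simp only [Set.mem_setOf_eq] at hgt ⊢
  linarith
end

section
/- Fix n, T ∈ ℕ, substochastic transition matrices q (q s i j ≥ 0 and ∑_j q s i j ≤ 1 for all s < T, i), rewards μ s i ∈ ℝ, a penalty c ∈ ℝ, and an initial occupancy π 0 with π 0 i ≥ 0 for all i. Define K by backward recursion K T i = 0, K s i = max (μ s i − c) (∑_j q s i j · K (s+1) j), and the threshold policy d* s i = (μ s i − c ≥ ∑_j q s i j · K (s+1) j). For any policy d, with λ the 0/1 indicator of d, occupancy π^d (s+1) j = ∑_i π^d s i · (1 − λ s i) · q s i j started from π 0, and transplantation mass ψ^d s i = π^d s i · λ s i, the threshold policy maximizes the aggregate penalized life gain: for every policy d, ∑_{s < T} ∑_i ψ^d s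 i · (μ s i − c) ≤ ∑_{s < T} ∑_i ψ^{d*} s i · (μ s i − c). -/
open Finset

/-- Occupancy nonnegativity. -/
lemma occ_nonneg {n T : ℕ} (q : ℕ → Fin n → Fin n → ℝ)
    (hq0 : ∀ s < T, ∀ i j, 0 ≤ q s i j)
    (d : ℕ → Fin n → Bool) (p : ℕ → Fin n → ℝ)
    (h0 : ∀ i, 0 ≤ p 0 i)
    (hp : ∀ s < T, ∀ j, p (s+1) j = ∑ i, p s i * (1 - (if d s i then (1:ℝ) else 0)) * q s i j) :
    ∀ s, s ≤ T → ∀ i, 0 ≤ p s i := by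
  intro s
  induction s with
  | zero => intro _ i; exact h0 i
  | succ t ih =>
    intro hle i
    have ht : t < T := lt_of_lt_of_le (Nat.lt_succ_self t) hle
    rw [hp t ht i]
    refine Finset.sum_nonneg fun j _ => ?_
    have h1 : (0:ℝ) ≤ 1 - (if d t j then (1:ℝ) else 0) := by
      by_cases h : d t j <;> simp [h]
    exact mul_nonneg (mul_nonneg (ih (le_of_lt ht) j) h1) (hq0 t ht j i)

/-- Generic one-step accounting identity and induction: value ≤ p·K. -/
lemma policy_value_le {n T : ℕ} (q : ℕ → Fin n → Fin n → ℝ) (μ : ℕ → Fin n → ℝ) (c : ℝ)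
    (K : ℕ → Fin n → ℝ) (hKT : ∀ i, K T i = 0)
    (d : ℕ → Fin n → Bool) (p : ℕ → Fin n → ℝ)
    (hpnn : ∀ s, s ≤ T → ∀ i, 0 ≤ p s i)
    (hp : ∀ s < T, ∀ j, p (s+1) j = ∑ i, p s i * (1 - (if d s i then (1:ℝ) else 0)) * q s i j)
    (hval : ∀ s < T, ∀ i,
      (if d s i then (1:ℝ) else 0) * (μ s i - c)
        + (1 - (if d s i then (1:ℝ) else 0)) * ∑ j, q s i j * K (s+1) j ≤ K s i) :
    ∀ m t, t + m = T →
      ∑ s ∈ Finset.Ico t T, ∑ i, (p s i * (if d s i then (1:ℝ) else 0)) * (μ s i - c)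
        ≤ ∑ i, p t i * K t i := by
  intro m
  induction m with
  | zero =>
    intro t ht
    have : t = T := by omega
    subst this
    simp [hKT]
  | succ m ih =>
    intro t ht
    have htT : t < T := by omega
    rw [Finset.sum_eq_sum_Ico_succ_bot (by omega : t < T)]
    have step : ∑ s ∈ Finset.Ico (t+1) T, ∑ i, (p s i * (if d s i then (1:ℝ) else 0)) * (μ s i - c)
        ≤ ∑ i, p (t+1) i * K (t+1) i := ih (t+1) (by omega)
    have key : ∑ i, p t i * (if d t i then (1:ℝ) else 0) * (μ t i - c)
        + ∑ j, p (t+1) j * K (t+1) j ≤ ∑ i, p t i * K t i := by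
      have hrw : ∑ j, p (t+1) j * K (t+1) j
          = ∑ i, p t i * ((1 - (if d t i then (1:ℝ) else 0)) * ∑ j, q t i j * K (t+1) j) := by
        calc ∑ j, p (t+1) j * K (t+1) j
            = ∑ j, (∑ i, p t i * (1 - (if d t i then (1:ℝ) else 0)) * q t i j) * K (t+1) j := by
              refine Finset.sum_congr rfl fun j _ => ?_
              rw [hp t htT j]
          _ = ∑ j, ∑ i, p t i * (1 - (if d t i then (1:ℝ) else 0)) * q t i j * K (t+1) j := by
              simp [Finset.sum_mul]
          _ = ∑ i, ∑ j, p t i * (1 - (if d t i then (1:ℝ) else 0)) * q t i j * K (t+1) j :=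
              Finset.sum_comm
          _ = ∑ i, p t i * ((1 - (if d t i then (1:ℝ) else 0)) * ∑ j, q t i j * K (t+1) j) := by
              refine Finset.sum_congr rfl fun i _ => ?_
              simp only [Finset.mul_sum]
              exact Finset.sum_congr rfl fun j _ => by ring
      rw [hrw, ← Finset.sum_add_distrib]
      refine Finset.sum_le_sum fun i _ => ?_
      have := hval t htT i
      have hnn := hpnn t (le_of_lt htT) i
      calc p t i * (if d t i then (1:ℝ) else 0) * (μ t i - c)
            + p t i * ((1 - (if d t i then (1:ℝ) else 0)) * ∑ j, q t i j * K (t+1) j)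
          = p t i * ((if d t i then (1:ℝ) else 0) * (μ t i - c)
            + (1 - (if d t i then (1:ℝ) else 0)) * ∑ j, q t i j * K (t+1) j) := by ring
        _ ≤ p t i * K t i := mul_le_mul_of_nonneg_left this hnn
    calc (∑ i, (p t i * (if d t i then (1:ℝ) else 0)) * (μ t i - c))
          + ∑ s ∈ Finset.Ico (t+1) T, ∑ i, (p s i * (if d s i then (1:ℝ) else 0)) * (μ s i - c)
        ≤ (∑ i, (p t i * (if d t i then (1:ℝ) else 0)) * (μ t i - c))
          + ∑ i, p (t+1) i * K (t+1) i := by linarith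
      _ ≤ ∑ i, p t i * K t i := key

/-- Equality version for a policy achieving the Bellman max. -/
lemma policy_value_eq {n T : ℕ} (q : ℕ → Fin n → Fin n → ℝ) (μ : ℕ → Fin n → ℝ) (c : ℝ)
    (K : ℕ → Fin n → ℝ) (hKT : ∀ i, K T i = 0)
    (d : ℕ → Fin n → Bool) (p : ℕ → Fin n → ℝ)
    (hp : ∀ s < T, ∀ j, p (s+1) j = ∑ i, p s i * (1 - (if d s i then (1:ℝ) else 0)) * q s i j)
    (hval : ∀ s < T, ∀ i,
      (if d s i then (1:ℝ) else 0) * (μ s i - c)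
        + (1 - (if d s i then (1:ℝ) else 0)) * ∑ j, q s i j * K (s+1) j = K s i) :
    ∀ m t, t + m = T →
      ∑ s ∈ Finset.Ico t T, ∑ i, (p s i * (if d s i then (1:ℝ) else 0)) * (μ s i - c)
        = ∑ i, p t i * K t i := by
  intro m
  induction m with
  | zero =>
    intro t ht
    have : t = T := by omega
    subst this
    simp [hKT]
  | succ m ih =>
    intro t ht
    have htT : t < T := by omega
    rw [Finset.sum_eq_sum_Ico_succ_bot (by omega : t < T), ih (t+1) (by omega)]
    have hrw : ∑ j, p (t+1) j * K (t+1) j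
        = ∑ i, p t i * ((1 - (if d t i then (1:ℝ) else 0)) * ∑ j, q t i j * K (t+1) j) := by
      calc ∑ j, p (t+1) j * K (t+1) j
          = ∑ j, (∑ i, p t i * (1 - (if d t i then (1:ℝ) else 0)) * q t i j) * K (t+1) j := by
            refine Finset.sum_congr rfl fun j _ => ?_
            rw [hp t htT j]
        _ = ∑ j, ∑ i, p t i * (1 - (if d t i then (1:ℝ) else 0)) * q t i j * K (t+1) j := by
            simp [Finset.sum_mul]
        _ = ∑ i, ∑ j, p t i * (1 - (if d t i then (1:ℝ) else 0)) * q t i j * K (t+1) j :=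
            Finset.sum_comm
        _ = ∑ i, p t i * ((1 - (if d t i then (1:ℝ) else 0)) * ∑ j, q t i j * K (t+1) j) := by
            refine Finset.sum_congr rfl fun i _ => ?_
            simp only [Finset.mul_sum]
            exact Finset.sum_congr rfl fun j _ => by ring
    rw [hrw, ← Finset.sum_add_distrib]
    refine Finset.sum_congr rfl fun i _ => ?_
    rw [← hval t htT i]; ring

open Finset in
/-- Theorem 3.3 in the discrete-time, finite-state setting: the threshold policy `d*`,
which transplants exactly when the immediate penalized life gain `μ s i - c` is at least
the optimal penalized continuation value given by the Bellman recursion `K`, maximizes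
the aggregate penalized life gain over all admissible policies, subject to the occupancy
dynamics started from a nonnegative initial occupancy. -/
theorem threshold_policy_maximizes_aggregate_gain
    (n T : ℕ) (q : ℕ → Fin n → Fin n → ℝ) (μ : ℕ → Fin n → ℝ) (c : ℝ)
    (pi0 : Fin n → ℝ)
    (hq0 : ∀ s < T, ∀ i j, 0 ≤ q s i j)
    (hq1 : ∀ s < T, ∀ i, ∑ j, q s i j ≤ 1)
    (hpi0 : ∀ i, 0 ≤ pi0 i)
    (K : ℕ → Fin n → ℝ)
    (hKT : ∀ i, K T i = 0)
    (hK : ∀ s < T, ∀ i, K s i = max (μ s i - c) (∑ j, q s i j * K (s + 1) j))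
    (dstar : ℕ → Fin n → Bool)
    (hdstar : ∀ s < T, ∀ i,
      dstar s i = true ↔ ∑ j, q s i j * K (s + 1) j ≤ μ s i - c)
    (d : ℕ → Fin n → Bool)
    (pid pistar : ℕ → Fin n → ℝ)
    (hpid0 : ∀ i, pid 0 i = pi0 i)
    (hpid : ∀ s < T, ∀ j,
      pid (s + 1) j = ∑ i, pid s i * (1 - (if d s i then (1 : ℝ) else 0)) * q s i j)
    (hpistar0 : ∀ i, pistar 0 i = pi0 i)
    (hpistar : ∀ s < T, ∀ j,
      pistar (s + 1) j
        = ∑ i, pistar s i * (1 - (if dstar s i then (1 : ℝ) else 0)) * q s i j) :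
    ∑ s ∈ Finset.range T, ∑ i,
        (pid s i * (if d s i then (1 : ℝ) else 0)) * (μ s i - c)
      ≤ ∑ s ∈ Finset.range T, ∑ i,
        (pistar s i * (if dstar s i then (1 : ℝ) else 0)) * (μ s i - c) := by
  have hpidnn : ∀ s, s ≤ T → ∀ i, 0 ≤ pid s i :=
    occ_nonneg q hq0 d pid (fun i => (hpid0 i) ▸ hpi0 i) hpid
  have hvald : ∀ s < T, ∀ i,
      (if d s i then (1:ℝ) else 0) * (μ s i - c)
        + (1 - (if d s i then (1:ℝ) else 0)) * ∑ j, q s i j * K (s+1) j ≤ K s i := by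
    intro s hs i
    rw [hK s hs i]
    by_cases h : d s i
    · simpa [h] using le_max_left (μ s i - c) (∑ j, q s i j * K (s+1) j)
    · simpa [h] using le_max_right (μ s i - c) (∑ j, q s i j * K (s+1) j)
  have hvalstar : ∀ s < T, ∀ i,
      (if dstar s i then (1:ℝ) else 0) * (μ s i - c)
        + (1 - (if dstar s i then (1:ℝ) else 0)) * ∑ j, q s i j * K (s+1) j = K s i := by
    intro s hs i
    rw [hK s hs i]
    by_cases h : dstar s i
    · have := (hdstar s hs i).1 h
      simp [h, max_eq_left this]
    · have : ¬ (∑ j, q s i j * K (s+1) j ≤ μ s i - c) := fun hc => h ((hdstar s hs i).2 hc)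
      simp [h, max_eq_right (le_of_not_ge this)]
  have h1 := policy_value_le q μ c K hKT d pid hpidnn hpid hvald T 0 (by omega)
  have h2 := policy_value_eq q μ c K hKT dstar pistar hpistar hvalstar T 0 (by omega)
  rw [Finset.range_eq_Ico]
  calc ∑ s ∈ Finset.Ico 0 T, ∑ i, (pid s i * (if d s i then (1:ℝ) else 0)) * (μ s i - c)
      ≤ ∑ i, pid 0 i * K 0 i := h1
    _ = ∑ i, pistar 0 i * K 0 i := by
        refine Finset.sum_congr rfl fun i _ => ?_
        rw [hpid0 i, hpistar0 i]
    _ = ∑ s ∈ Finset.Ico 0 T, ∑ i, (pistar s i * (if dstar s i then (1:ℝ) else 0)) * (μ s i - c) := h2.symm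
end
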